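/- arXiv:math/0510566 — 4 statements merged into one kernel-verified Lean document; each statement's English description precedes it below -/
import Mathlib

section
/- Let V be a vector space over a field F, let v_1,...,v_k ∈ V, and let A_1,...,A_k, B_1,...,B_k be linear endomorphisms of V such that: (i) A_i B_i A_i = A_i for all i; (ii) the A_i commute pairwise; (iii) A_i(v_j) = A_j(v_i) for all i,j; (iv) A_i B_i(v_i) = v_i for all i, and A_i B_j = B_j A_i for all i ≠ j. Then there exists v ∈ V such that A_i(v) = v_i for all i. -/
/-!
Add the equations one at a time. If `w` solves `A_i w = v_i` for `i ∈ s` and `j ∉ s`, the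
corrected vector `w + B_j (v_j - A_j w)` also solves `A_j w' = v_j`, because `A_j B_j A_j = A_j`
and `A_j B_j v_j = v_j`; and it still solves the old equations, because `A_i` commutes with
`B_j` and `A_j`, and `A_i (v_j - A_j w) = A_j v_i - A_j v_i = 0` by the compatibility `A_i v_j = A_j v_i`.
-/

namespace Module.End

variable {R V : Type*} [Ring R] [AddCommGroup V] [Module R V]

theorem apply_add_apply_sub_eq_of_mul_mul_eq {A B : Module.End R V} (hABA : A * B * A = A)
    (w : V) {u : V} (hu : A (B u) = u) : A (w + B (u - A w)) = u := by
  have hw : A (B (A w)) = A w := LinearMap.congr_fun hABA w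
  rw [map_add, map_sub, map_sub, hu, hw]
  abel

theorem apply_add_apply_sub_eq_of_commute {A B C : Module.End R V} (hCA : Commute C A)
    (hCB : Commute C B) {w u : V} (hu : C u = A (C w)) : C (w + B (u - A w)) = C w := by
  have hCB' : C (B (u - A w)) = B (C (u - A w)) := LinearMap.congr_fun hCB.eq _
  have hCA' : C (A w) = A (C w) := LinearMap.congr_fun hCA.eq w
  rw [map_add, hCB', map_sub, hCA', hu, sub_self, map_zero, add_zero]

theorem exists_forall_mem_apply_eq {ι : Type*} [DecidableEq ι] (v : ι → V)
    (A B : ι → Module.End R V) (hABA : ∀ i, A i * B i * A i = A i)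
    (hAA : ∀ i j, Commute (A i) (A j)) (hv : ∀ i j, A i (v j) = A j (v i))
    (hABv : ∀ i, A i (B i (v i)) = v i) (hAB : ∀ i j, i ≠ j → Commute (A i) (B j))
    (s : Finset ι) : ∃ w : V, ∀ i ∈ s, A i w = v i := by
  induction s using Finset.induction_on with
  | empty => exact ⟨0, by simp⟩
  | insert j s hj ih =>
    obtain ⟨w, hw⟩ := ih
    refine ⟨w + B j (v j - A j w), (Finset.forall_mem_insert _ _ _).2 ⟨?_, fun i hi => ?_⟩⟩
    · exact apply_add_apply_sub_eq_of_mul_mul_eq (hABA j) w (hABv j)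
    · have hij : i ≠ j := fun h => hj (h ▸ hi)
      rw [apply_add_apply_sub_eq_of_commute (hAA i j) (hAB i j hij) (by rw [hv, hw i hi]), hw i hi]

end Module.End

/-- Lemma 1.3: a common solution for a family of commuting "pseudo-invertible"
endomorphisms. -/
theorem stmt0 (F V : Type*) [Field F] [AddCommGroup V] [Module F V]
    (k : ℕ) (v : Fin k → V) (A B : Fin k → Module.End F V)
    (h1 : ∀ i, A i * B i * A i = A i)
    (h2 : ∀ i j, A i * A j = A j * A i)
    (h3 : ∀ i j, A i (v j) = A j (v i))
    (h4 : ∀ i, (A i) ((B i) (v i)) = v i)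
    (h5 : ∀ i j, i ≠ j → A i * B j = B j * A i) :
    ∃ w : V, ∀ i, A i w = v i := by
  obtain ⟨w, hw⟩ := Module.End.exists_forall_mem_apply_eq v A B h1 h2 h3 h4 h5 Finset.univ
  exact ⟨w, fun i => hw i (Finset.mem_univ i)⟩
end

section
/- Let r ≤ n be a positive integer and let f_1,...,f_r ∈ Λ(n) be elements of the exterior algebra on generators x_{n+1},...,x_{2n}. Let Δ_i := x_{i'} ∂_{i'} where i' = i+n. Suppose (a) Δ_i(f_j) = Δ_j(f_i) for all 1 ≤ i,j ≤ r, and (b) Δ_i(f_i) = f_i for i = 1,...,r. Then there exists f ∈ Λ(n) such that Δ_i(f) = f_i for i = 1,...,r. -/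
open scoped BigOperators Classical

/-! A concrete model of the exterior algebra `Λ(n)` on odd generators
`x_{n+1}, …, x_{2n}` (indexed here by `Fin n`): an element is the family of its
coefficients on the basis monomials `x^u`, `u ⊆ {n+1, …, 2n}`. -/

/-- The exterior algebra `Λ(n)` over `F`, as coefficient families. -/
abbrev Lam (F : Type*) (n : ℕ) := Finset (Fin n) → F

/-- The odd superderivation `∂_k` of `Λ(n)`, determined by `∂_k (x_l) = δ_{kl}`:
on monomials, `∂_k (x^u) = (−1)^{#{j ∈ u : j < k}} x^{u \ {k}}` if `k ∈ u`, else `0`. -/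
def pd {F : Type*} [Field F] {n : ℕ} (k : Fin n) (f : Lam F n) : Lam F n := fun u =>
  if k ∈ u then 0
  else (-1 : F) ^ ((u.filter fun j => j < k).card) * f (insert k u)

/-- Left multiplication by the generator `x_k` on `Λ(n)`. -/
def mx {F : Type*} [Field F] {n : ℕ} (k : Fin n) (f : Lam F n) : Lam F n := fun u =>
  if k ∈ u then (-1 : F) ^ ((u.filter fun j => j < k).card) * f (u.erase k)
  else 0

/-- The operator `Δ_k = x_k ∂_k` on `Λ(n)`. -/
def Dl {F : Type*} [Field F] {n : ℕ} (k : Fin n) (f : Lam F n) : Lam F n :=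
  mx k (pd k f)

lemma Dl_apply {F : Type*} [Field F] {n : ℕ} (k : Fin n) (f : Lam F n) (u : Finset (Fin n)) :
    Dl k f u = if k ∈ u then f u else 0 := by
  unfold Dl mx pd
  by_cases h : k ∈ u
  · have hk : k ∉ u.erase k := Finset.notMem_erase k u
    simp only [h, if_true, hk, if_false, Finset.insert_erase h]
    have hfil : (u.erase k).filter (fun j => j < k) = u.filter (fun j => j < k) := by
      rw [Finset.filter_erase]
      exact Finset.erase_eq_of_notMem (by simp)
    rw [hfil, ← mul_assoc, ← pow_add, Even.neg_one_pow ⟨_, rfl⟩, one_mul]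
  · simp [h]

/-- Lemma 2.5: if `f_1, …, f_r ∈ Λ(n)` satisfy `Δ_i (f_j) = Δ_j (f_i)` and
`Δ_i (f_i) = f_i`, then there is `f ∈ Λ(n)` with `Δ_i (f) = f_i` for all `i`. -/
theorem stmt6 (F : Type*) [Field F] (n r : ℕ) (hr : 0 < r) (hrn : r ≤ n)
    (f : Fin r → Lam F n)
    (ha : ∀ i j : Fin r, Dl (Fin.castLE hrn i) (f j) = Dl (Fin.castLE hrn j) (f i))
    (hb : ∀ i : Fin r, Dl (Fin.castLE hrn i) (f i) = f i) :
    ∃ g : Lam F n, ∀ i : Fin r, Dl (Fin.castLE hrn i) g = f i := by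
  refine ⟨fun u => if h : ∃ i : Fin r, Fin.castLE hrn i ∈ u then f h.choose u else 0, ?_⟩
  intro i
  funext u
  rw [Dl_apply]
  by_cases hi : Fin.castLE hrn i ∈ u
  · have hex : ∃ j : Fin r, Fin.castLE hrn j ∈ u := ⟨i, hi⟩
    simp only [hi, if_true, hex, dif_pos]
    have hj := hex.choose_spec
    have := congrFun (ha hex.choose i) u
    rw [Dl_apply, Dl_apply] at this
    simpa [hi, hj] using this.symm
  · have := congrFun (hb i) u
    rw [Dl_apply] at this
    simp only [hi, if_false] at this ⊢
    exact this
end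

section
/- Let O(n,n;t̲) be the truncated divided power superalgebra and T_H: O(n,n;t̲) → W(n,n;t̲) the odd linear map T_H(a) = Σ_{i=1}^{2n} (−1)^{μ(i)p(a)} ∂_i(a) ∂_{i'}. Then for all homogeneous a, b ∈ O(n,n;t̲): [T_H(a), T_H(b)] = T_H(T_H(a)(b)). In particular, the image HO(n,n;t̲) = T_H(O(n,n;t̲)) is a Lie subsuperalgebra of W(n,n;t̲). -/
open scoped BigOperators Classical

/-! A concrete model of the truncated divided power superalgebra
`O(n,n;t̲)` over a field `F` of characteristic `p > 3`, of the generalized Witt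
superalgebra `W(n,n;t̲)` and of the odd Hamiltonian map `T_H`.  A basis element of
`O(n,n;t̲)` is `x^(α) x^u` with `α i ≤ p^(t i) − 1` and `u ⊆ {n+1,…,2n}` (odd
indices are represented by `Fin n`, with `k : Fin n` standing for `x_{n+k}`);
an element of `O(n,n;t̲)` is its family of coefficients. -/

section OddHam

variable (p n : ℕ) (t : Fin n → ℕ) (F : Type*) [Field F]

/-- Index set for the monomial basis `x^(α) x^u` of `O(n,n;t̲)`. -/
abbrev Idx := ((i : Fin n) → Fin (p ^ t i)) × Finset (Fin n)

/-- The truncated divided power superalgebra `O(n,n;t̲)`, as coefficient families. -/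
abbrev O := Idx p n t → F

/-- Multiplication of `O(n,n;t̲)`:  `x^(α) x^(β) = (∏ᵢ C(αᵢ+βᵢ, αᵢ)) x^(α+β)`
(truncated), and the exterior variables anticommute. -/
noncomputable def omul (f g : O p n t F) : O p n t F := fun x =>
  ∑ y : Idx p n t, ∑ z : Idx p n t,
    if (∀ i, (y.1 i : ℕ) + (z.1 i : ℕ) = (x.1 i : ℕ)) ∧ Disjoint y.2 z.2 ∧ y.2 ∪ z.2 = x.2
    then f y * g z * (∏ i, (((x.1 i : ℕ).choose (y.1 i : ℕ) : ℕ) : F)) *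
      (-1 : F) ^ (∑ a ∈ y.2, ((z.2.filter fun b => b < a).card))
    else 0

/-- The even superderivation `∂_i`, `i ∈ Y_0`:  `∂_i (x^(α)) = x^(α − ε_i)`. -/
noncomputable def dEven (i : Fin n) (f : O p n t F) : O p n t F := fun x =>
  if h : (x.1 i : ℕ) + 1 < p ^ t i
  then f (Function.update x.1 i ⟨(x.1 i : ℕ) + 1, h⟩, x.2)
  else 0

/-- The odd superderivation `∂_{n+k}`, `k ∈ Y_1`. -/
noncomputable def dOdd (k : Fin n) (f : O p n t F) : O p n t F := fun x =>
  if k ∈ x.2 then 0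
  else (-1 : F) ^ ((x.2.filter fun b => b < k).card) * f (x.1, insert k x.2)

/-- The generalized Witt superalgebra `W(n,n;t̲)`: an element `Σ_r f_r ∂_r` is
recorded as the family of its coefficients, `Sum.inl i ↦` coefficient of the even
`∂_i` and `Sum.inr k ↦` coefficient of the odd `∂_{n+k}`. -/
abbrev W := (Fin n ⊕ Fin n) → O p n t F

/-- The superderivation `∂_r` for `r ∈ Y = Y_0 ∪ Y_1`. -/
noncomputable def dd (r : Fin n ⊕ Fin n) : O p n t F → O p n t F :=
  Sum.elim (dEven p n t F) (dOdd p n t F) r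

/-- The action of `X = Σ_r X_r ∂_r ∈ W(n,n;t̲)` on `O(n,n;t̲)`. -/
noncomputable def act (X : W p n t F) (b : O p n t F) : O p n t F :=
  ∑ r : Fin n ⊕ Fin n, omul p n t F (X r) (dd p n t F r b)

/-- `a` is `ℤ₂`-homogeneous of parity `pa`. -/
def Homog (pa : ℕ) (a : O p n t F) : Prop :=
  ∀ x, a x ≠ 0 → x.2.card % 2 = pa % 2

/-- The odd Hamiltonian map `T_H (a) = Σ_{i=1}^{2n} (−1)^{μ(i) p(a)} ∂_i(a) ∂_{i'}`,
for `a` homogeneous of parity `pa`. -/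
noncomputable def TH (pa : ℕ) (a : O p n t F) : W p n t F :=
  Sum.elim (fun i => ((-1 : F) ^ pa) • dOdd p n t F i a) (fun k => dEven p n t F k a)

/-- The superbracket of `W(n,n;t̲)` on homogeneous elements `X, Y` of parities
`px, py`:  `[X,Y] = Σ_s (Σ_r X_r ∂_r(Y_s)) ∂_s − (−1)^{px·py} Σ_s (Σ_r Y_r ∂_r(X_s)) ∂_s`. -/
noncomputable def brkH (px py : ℕ) (X Y : W p n t F) : W p n t F := fun s =>
  act p n t F X (Y s) - ((-1 : F) ^ (px * py)) • act p n t F Y (X s)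

/-- The divided power monomial `x^(q ε_i)`. -/
noncomputable def epow (i : Fin n) (q : ℕ) : O p n t F := fun x =>
  if (∀ j, (x.1 j : ℕ) = if j = i then q else 0) ∧ x.2 = ∅ then 1 else 0

/-- The even variable `x_i`, `i ∈ Y_0`. -/
noncomputable def evar (i : Fin n) : O p n t F := epow p n t F i 1

/-- The odd variable `x_{n+k}`, `k ∈ Y_1`. -/
noncomputable def ovar (k : Fin n) : O p n t F := fun x =>
  if (∀ j, (x.1 j : ℕ) = 0) ∧ x.2 = {k} then 1 else 0

/-- `Δ_i = T_H(x_i x_{i'}) = x_{i'} ∂_{i'} − x_i ∂_i`. -/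
noncomputable def Delta (i : Fin n) : W p n t F :=
  TH p n t F 1 (omul p n t F (evar p n t F i) (ovar p n t F i))

end OddHam

/-!
Both partial derivatives are weighted composition operators `h ↦ w · (h ∘ σ)` on coefficient
families: `σ` shifts one divided-power exponent (cyclically, the wrap-around having weight `0`)
or toggles one odd index. The structure constants of `O(n,n;t̲)` factor into binomial
coefficients of the even variables and shuffle signs of the odd ones, so the super-Leibniz rule
for `∂_i` reduces to Pascal's rule plus `p ∣ C(p^t, b)` for `0 < b < p^t`, and the one for
`∂_{i'}` to counting inversions. Hence every `∂_r` acts on `T_H(a)(c)` as a superderivation, and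
`∂_r ∘ T_H = ± T_H ∘ ∂_r`. Together with the super-antisymmetry
`T_H(a)(b) = −(−1)^{(p(a)+1)(p(b)+1)} T_H(b)(a)`, inherited from supercommutativity of `O`,
comparing the coefficients of each `∂_s` gives `[T_H(a), T_H(b)] = T_H(T_H(a)(b))`.
-/

open Finset
open scoped symmDiff

namespace OddHamiltonian

lemma neg_one_pow_eq_of_mod_two_eq {R : Type*} [Monoid R] [HasDistribNeg R] {m k : ℕ}
    (h : m % 2 = k % 2) : (-1 : R) ^ m = (-1) ^ k :=
  neg_one_pow_congr (by rw [Nat.even_iff, Nat.even_iff, h])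

lemma neg_one_pow_mul_self {R : Type*} [Monoid R] [HasDistribNeg R] (m : ℕ) :
    (-1 : R) ^ m * (-1) ^ m = 1 := by
  rw [← pow_add, Even.neg_one_pow ⟨m, rfl⟩]

section FinsetToggle

variable {α : Type*} [DecidableEq α] {k : α} {s t : Finset α}

lemma insert_eq_insert_iff (hs : k ∉ s) (ht : k ∉ t) :
    insert k s = insert k t ↔ s = t :=
  ⟨fun h => by rw [← erase_insert hs, h, erase_insert ht], fun h => h ▸ rfl⟩

lemma exists_eq_insert_of_mem (h : k ∈ s) : ∃ t, k ∉ t ∧ s = insert k t :=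
  ⟨s.erase k, notMem_erase k s, (insert_erase h).symm⟩

lemma symmDiff_singleton_of_mem (h : k ∈ s) : s ∆ {k} = s.erase k := by
  ext a
  by_cases ha : a = k <;> simp [mem_symmDiff, ha, h]

lemma symmDiff_singleton_of_notMem (h : k ∉ s) : s ∆ {k} = insert k s := by
  ext a
  by_cases ha : a = k <;> simp [mem_symmDiff, ha, h]

end FinsetToggle

section Inversions

variable {α : Type*} [LinearOrder α] {k : α} {s u v : Finset α}

def countBelow (s : Finset α) (a : α) : ℕ := #{b ∈ s | b < a}

def inversions (u v : Finset α) : ℕ := ∑ a ∈ u, countBelow v a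

lemma countBelow_insert (hk : k ∉ s) (a : α) :
    countBelow (insert k s) a = countBelow s a + if k < a then 1 else 0 := by
  unfold countBelow
  rw [filter_insert]
  split_ifs
  · exact card_insert_of_notMem fun h => hk (mem_filter.mp h).1
  · rfl

lemma countBelow_insert_self (s : Finset α) (k : α) :
    countBelow (insert k s) k = countBelow s k := by
  simp [countBelow, filter_insert]

lemma countBelow_erase_self (s : Finset α) (k : α) :
    countBelow (s.erase k) k = countBelow s k := by
  simp [countBelow, filter_erase]

lemma countBelow_union (h : Disjoint u v) (a : α) :
    countBelow (u ∪ v) a = countBelow u a + countBelow v a := by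
  unfold countBelow
  rw [filter_union, card_union_of_disjoint (disjoint_filter_filter h)]

lemma card_filter_gt_add_countBelow (hk : k ∉ u) : #{a ∈ u | k < a} + countBelow u k = #u := by
  unfold countBelow
  rw [← card_union_of_disjoint (disjoint_filter.2 fun a _ h h' => lt_asymm h h'), ← filter_or,
    filter_true_of_mem fun a ha => (ne_of_mem_of_not_mem ha hk).lt_or_gt.symm]

lemma inversions_insert_left (hk : k ∉ u) (v : Finset α) :
    inversions (insert k u) v = countBelow v k + inversions u v :=
  sum_insert hk

lemma inversions_insert_right (u : Finset α) (hk : k ∉ v) :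
    inversions u (insert k v) = inversions u v + #{a ∈ u | k < a} := by
  simp only [inversions, countBelow_insert hk, sum_add_distrib, card_filter]

lemma inversions_add_inversions (h : Disjoint u v) : inversions u v + inversions v u = #u * #v := by
  induction u using Finset.induction_on with
  | empty => simp [inversions, countBelow]
  | insert k u hku ih =>
    rw [disjoint_insert_left] at h
    have hv := card_filter_gt_add_countBelow h.1
    rw [inversions_insert_left hku, inversions_insert_right v hku, card_insert_of_notMem hku,
      add_one_mul, ← ih h.2, ← hv]
    ring

end Inversions

section ExteriorCoefficients

variable {α : Type*} [LinearOrder α] {R : Type*} [CommRing R] {k : α} {x y z : Finset α}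

def extCoeff (x y z : Finset α) : R :=
  if Disjoint y z ∧ y ∪ z = x then (-1) ^ inversions y z else 0

lemma extCoeff_swap (x y z : Finset α) :
    (extCoeff x z y : R) = (-1) ^ (#y * #z) * extCoeff x y z := by
  unfold extCoeff
  simp only [disjoint_comm (a := z), union_comm z]
  split_ifs with h
  · rw [← inversions_add_inversions h.1, pow_add]
    linear_combination -(-1 : R) ^ inversions z y * neg_one_pow_mul_self (R := R) (inversions y z)
  · rw [mul_zero]

lemma extCoeff_eq_zero_of_mem_of_mem (hy : k ∈ y) (hz : k ∈ z) : (extCoeff x y z : R) = 0 :=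
  if_neg fun h => disjoint_left.mp h.1 hy hz

lemma extCoeff_eq_zero_of_not_mem_iff (h : ¬(k ∈ x ↔ k ∈ y ∨ k ∈ z)) :
    (extCoeff x y z : R) = 0 :=
  if_neg fun h' => h (by rw [← h'.2, mem_union])

lemma extCoeff_insert_insert_left (hx : k ∉ x) (hy : k ∉ y) (hz : k ∉ z) :
    (extCoeff (insert k x) (insert k y) z : R) =
      (-1) ^ (countBelow x k + countBelow y k) * extCoeff x y z := by
  unfold extCoeff
  simp only [disjoint_insert_left, insert_union, hz, not_false_eq_true, true_and,
    insert_eq_insert_iff (s := y ∪ z) (by simp [hy, hz]) hx]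
  split_ifs with h
  · rw [inversions_insert_left hy, ← h.2, countBelow_union h.1, pow_add, pow_add, pow_add]
    linear_combination -(-1 : R) ^ countBelow z k * (-1) ^ inversions y z *
      neg_one_pow_mul_self (R := R) (countBelow y k)
  · rw [mul_zero]

lemma extCoeff_insert_insert_right (hx : k ∉ x) (hy : k ∉ y) (hz : k ∉ z) :
    (extCoeff (insert k x) y (insert k z) : R) =
      (-1) ^ (countBelow x k + #y + countBelow z k) * extCoeff x y z := by
  unfold extCoeff
  simp only [disjoint_insert_right, union_insert, hy, not_false_eq_true, true_and,
    insert_eq_insert_iff (s := y ∪ z) (by simp [hy, hz]) hx]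
  split_ifs with h
  · rw [inversions_insert_right y hz, ← h.2, countBelow_union h.1,
      ← card_filter_gt_add_countBelow hy]
    simp only [pow_add]
    linear_combination -(-1 : R) ^ inversions y z * (-1) ^ #{a ∈ y | k < a} *
      ((-1) ^ countBelow y k * (-1) ^ countBelow y k *
          neg_one_pow_mul_self (R := R) (countBelow z k) +
        neg_one_pow_mul_self (R := R) (countBelow y k))
  · rw [mul_zero]

def oddWeight (k : α) (s : Finset α) : R := if k ∈ s then 0 else (-1) ^ countBelow s k

lemma oddWeight_symmDiff_singleton_mul (k : α) (s : Finset α) (g : Finset α → R) :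
    oddWeight k (s ∆ {k}) * g (s ∆ {k}) =
      if k ∈ s then (-1) ^ countBelow s k * g (s.erase k) else 0 := by
  by_cases h : k ∈ s
  · simp [oddWeight, symmDiff_singleton_of_mem h, h, countBelow_erase_self]
  · simp [oddWeight, symmDiff_singleton_of_notMem h, h]

lemma extCoeff_leibniz_of_notMem (hx : k ∉ x) :
    (-1) ^ countBelow x k * (extCoeff (insert k x) y z : R) =
      (if k ∈ y then (-1) ^ countBelow y k * extCoeff x (y.erase k) z else 0) +
        (-1) ^ #y * (if k ∈ z then (-1) ^ countBelow z k * extCoeff x y (z.erase k) else 0) := by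
  by_cases hy : k ∈ y <;> by_cases hz : k ∈ z
  · simp [hx, hy, hz, extCoeff_eq_zero_of_mem_of_mem (R := R) hy hz,
      extCoeff_eq_zero_of_not_mem_iff (R := R) (k := k)]
  · obtain ⟨y, hy', rfl⟩ := exists_eq_insert_of_mem hy
    rw [extCoeff_insert_insert_left hx hy' hz, if_pos hy, if_neg hz, erase_insert hy',
      countBelow_insert_self, pow_add]
    linear_combination (-1 : R) ^ countBelow y k * extCoeff x y z *
      neg_one_pow_mul_self (R := R) (countBelow x k)
  · obtain ⟨z, hz', rfl⟩ := exists_eq_insert_of_mem hz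
    rw [extCoeff_insert_insert_right hx hy hz', if_neg hy, if_pos hz, erase_insert hz',
      countBelow_insert_self, pow_add, pow_add]
    linear_combination (-1 : R) ^ #y * (-1) ^ countBelow z k * extCoeff x y z *
      neg_one_pow_mul_self (R := R) (countBelow x k)
  · simp [hy, hz, extCoeff_eq_zero_of_not_mem_iff (R := R) (k := k)]

lemma extCoeff_leibniz_of_mem (hx : k ∈ x) :
    (if k ∈ y then (-1) ^ countBelow y k * (extCoeff x (y.erase k) z : R) else 0) +
      (-1) ^ #y * (if k ∈ z then (-1) ^ countBelow z k * extCoeff x y (z.erase k) else 0) =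
        0 := by
  by_cases hy : k ∈ y <;> by_cases hz : k ∈ z
  · obtain ⟨x, hx', rfl⟩ := exists_eq_insert_of_mem hx
    obtain ⟨y, hy', rfl⟩ := exists_eq_insert_of_mem hy
    obtain ⟨z, hz', rfl⟩ := exists_eq_insert_of_mem hz
    rw [if_pos hy, if_pos hz, erase_insert hy', erase_insert hz', countBelow_insert_self,
      countBelow_insert_self, extCoeff_insert_insert_left hx' hy' hz',
      extCoeff_insert_insert_right hx' hy' hz', card_insert_of_notMem hy']
    ring
  · simp [hx, hy, hz, extCoeff_eq_zero_of_not_mem_iff (R := R) (k := k)]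
  · simp [hx, hy, hz, extCoeff_eq_zero_of_not_mem_iff (R := R) (k := k)]
  · simp [hy, hz]

lemma extCoeff_leibniz (k : α) (x y z : Finset α) :
    oddWeight k x * (extCoeff (x ∆ {k}) y z : R) =
      oddWeight k (y ∆ {k}) * extCoeff x (y ∆ {k}) z +
        (-1) ^ #y * (oddWeight k (z ∆ {k}) * extCoeff x y (z ∆ {k})) := by
  rw [oddWeight_symmDiff_singleton_mul k y (fun s => extCoeff x s z),
    oddWeight_symmDiff_singleton_mul k z (extCoeff x y), oddWeight]
  by_cases hx : k ∈ x
  · rw [if_pos hx, zero_mul, extCoeff_leibniz_of_mem hx]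
  · rw [if_neg hx, symmDiff_singleton_of_notMem hx, extCoeff_leibniz_of_notMem hx]

end ExteriorCoefficients

section DividedPowerCoefficients

variable {R : Type*} [CommRing R]

def dpCoeff (a b c : ℕ) : R := if b + c = a then (a.choose b : R) else 0

lemma dpCoeff_swap (a b c : ℕ) : (dpCoeff a c b : R) = dpCoeff a b c := by
  unfold dpCoeff
  rw [add_comm c b]
  split_ifs with h
  · rw [Nat.choose_symm_of_eq_add h.symm]
  · rfl

lemma dpCoeff_succ (a b c : ℕ) :
    (dpCoeff (a + 1) b c : R) =
      (if b = 0 then 0 else dpCoeff a (b - 1) c) + (if c = 0 then 0 else dpCoeff a b (c - 1)) := by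
  rcases b with _ | b <;> rcases c with _ | c <;> simp only [dpCoeff] <;> split_ifs <;>
    first | omega | simp_all [Nat.choose_succ_succ', add_comm]

lemma dpCoeff_prime_pow_eq_zero {p m : ℕ} (hp : p.Prime) [CharP R p] {b c : ℕ} (hb : b < p ^ m)
    (hc : c < p ^ m) : (dpCoeff (p ^ m) b c : R) = 0 := by
  unfold dpCoeff
  split_ifs with h
  · exact (CharP.cast_eq_zero_iff R p _).mpr (hp.dvd_choose_pow (by omega) (by omega))
  · rfl

lemma ite_mul_finRotate {m : ℕ} (a : Fin m) (g : ℕ → R) :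
    (if (a : ℕ) + 1 < m then 1 else 0) * g (finRotate m a) =
      if (a : ℕ) + 1 < m then g (a + 1) else 0 := by
  split_ifs with h
  · rw [one_mul, finRotate_apply, Fin.val_add_one_of_lt' h]
  · rw [zero_mul]

lemma ite_mul_finRotate_symm {m : ℕ} (b : Fin m) (g : ℕ → R) :
    (if ((finRotate m).symm b : ℕ) + 1 < m then 1 else 0) * g ((finRotate m).symm b) =
      if (b : ℕ) = 0 then 0 else g (b - 1) := by
  obtain ⟨m, rfl⟩ := Nat.exists_eq_add_one_of_ne_zero b.pos.ne'
  by_cases hb : (b : ℕ) = 0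
  · have : b = 0 := Fin.ext hb
    subst this
    simp
  · rw [coe_finRotate_symm_of_ne_zero (Fin.val_ne_zero_iff.mp hb), if_pos (by omega), if_neg hb,
      one_mul]

lemma dpCoeff_finRotate {p m : ℕ} (hp : p.Prime) [CharP R p] (a b c : Fin (p ^ m)) :
    (if (a : ℕ) + 1 < p ^ m then 1 else 0) * (dpCoeff (finRotate _ a) b c : R) =
      (if ((finRotate _).symm b : ℕ) + 1 < p ^ m then 1 else 0) *
          dpCoeff a ((finRotate _).symm b) c +
        (if ((finRotate _).symm c : ℕ) + 1 < p ^ m then 1 else 0) *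
          dpCoeff a b ((finRotate _).symm c) := by
  rw [ite_mul_finRotate a (fun a' => dpCoeff a' b c),
    ite_mul_finRotate_symm b (fun b' => dpCoeff a b' c), ite_mul_finRotate_symm c (dpCoeff a b),
    ← dpCoeff_succ]
  split_ifs with h
  · rfl
  · rw [show (a : ℕ) + 1 = p ^ m by omega, dpCoeff_prime_pow_eq_zero hp b.2 c.2]

end DividedPowerCoefficients

section Superalgebra

variable {p n : ℕ} {t : Fin n → ℕ} {F : Type*} [Field F]

/-- The coefficient of the basis monomial indexed by `x` in the product of those indexed by
`y` and `z`. -/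
def structConst (x y z : Idx p n t) : F :=
  extCoeff x.2 y.2 z.2 * ∏ j, dpCoeff (x.1 j) (y.1 j) (z.1 j)

lemma omul_apply_eq_sum (f g : O p n t F) (x : Idx p n t) :
    omul p n t F f g x = ∑ y, ∑ z, f y * g z * structConst x y z := by
  refine sum_congr rfl fun y _ => sum_congr rfl fun z _ => ?_
  simp only [structConst, extCoeff, inversions, countBelow, dpCoeff, Fintype.prod_ite_zero]
  split_ifs <;> first | ring1 | tauto

lemma omul_smul_left (c : F) (f g : O p n t F) :
    omul p n t F (c • f) g = c • omul p n t F f g := by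
  ext x
  simp only [omul_apply_eq_sum, Pi.smul_apply, smul_eq_mul, mul_sum]
  exact sum_congr rfl fun _ _ => sum_congr rfl fun _ _ => by ring

lemma omul_smul_right (c : F) (f g : O p n t F) :
    omul p n t F f (c • g) = c • omul p n t F f g := by
  ext x
  simp only [omul_apply_eq_sum, Pi.smul_apply, smul_eq_mul, mul_sum]
  exact sum_congr rfl fun _ _ => sum_congr rfl fun _ _ => by ring

lemma omul_neg_right (f g : O p n t F) : omul p n t F f (-g) = -omul p n t F f g := by
  rw [← neg_one_smul F g, omul_smul_right, neg_one_smul]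

lemma structConst_swap (x y z : Idx p n t) :
    (structConst x z y : F) = (-1) ^ (#y.2 * #z.2) * structConst x y z := by
  rw [structConst, structConst, extCoeff_swap, Fintype.prod_congr _ _ fun j => dpCoeff_swap _ _ _]
  ring

theorem omul_comm {pf pg : ℕ} {f g : O p n t F} (hf : Homog p n t F pf f)
    (hg : Homog p n t F pg g) :
    omul p n t F f g = (-1 : F) ^ (pf * pg) • omul p n t F g f := by
  ext x
  rw [Pi.smul_apply, smul_eq_mul, omul_apply_eq_sum, omul_apply_eq_sum (x := x) g, sum_comm,
    mul_sum]
  refine sum_congr rfl fun v _ => ?_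
  rw [mul_sum]
  refine sum_congr rfl fun u _ => ?_
  by_cases hfg : f u = 0 ∨ g v = 0
  · rcases hfg with h | h <;> simp [h]
  push Not at hfg
  have hsign : (-1 : F) ^ (#u.2 * #v.2) = (-1) ^ (pf * pg) :=
    neg_one_pow_eq_of_mod_two_eq (by rw [Nat.mul_mod, hf u hfg.1, hg v hfg.2, ← Nat.mul_mod])
  rw [structConst_swap x u v, hsign]
  linear_combination -f u * g v * structConst x u v * neg_one_pow_mul_self (R := F) (pf * pg)

def weightedComp (w : Idx p n t → F) (σ : Idx p n t ≃ Idx p n t) :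
    O p n t F →ₗ[F] O p n t F where
  toFun h x := w x * h (σ x)
  map_add' _ _ := by ext; simp [mul_add]
  map_smul' _ _ := by ext; simp [mul_left_comm]

lemma weightedComp_apply (w : Idx p n t → F) (σ : Idx p n t ≃ Idx p n t) (h : O p n t F)
    (x : Idx p n t) : weightedComp w σ h x = w x * h (σ x) := rfl

theorem weightedComp_omul (w : Idx p n t → F) (σ : Idx p n t ≃ Idx p n t) (ε : F)
    {f : O p n t F} (g : O p n t F)
    (hc : ∀ x y z, f y ≠ 0 → w x * structConst (σ x) y z =
      w (σ.symm y) * structConst x (σ.symm y) z +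
        ε * (w (σ.symm z) * structConst x y (σ.symm z))) :
    weightedComp w σ (omul p n t F f g) =
      omul p n t F (weightedComp w σ f) g + ε • omul p n t F f (weightedComp w σ g) := by
  ext x
  have h₁ : omul p n t F (weightedComp w σ f) g x =
      ∑ y, ∑ z, w (σ.symm y) * f y * g z * structConst x (σ.symm y) z := by
    rw [omul_apply_eq_sum, ← σ.symm.sum_comp]
    simp [weightedComp_apply]
  have h₂ : omul p n t F f (weightedComp w σ g) x =
      ∑ y, ∑ z, f y * (w (σ.symm z) * g z) * structConst x y (σ.symm z) := by
    rw [omul_apply_eq_sum]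
    refine sum_congr rfl fun y _ => ?_
    rw [← σ.symm.sum_comp]
    simp [weightedComp_apply]
  rw [Pi.add_apply, Pi.smul_apply, smul_eq_mul, h₁, h₂, weightedComp_apply, omul_apply_eq_sum,
    mul_sum, mul_sum, ← sum_add_distrib]
  refine sum_congr rfl fun y _ => ?_
  rw [mul_sum, mul_sum, ← sum_add_distrib]
  refine sum_congr rfl fun z _ => ?_
  by_cases hy : f y = 0
  · simp [hy]
  · linear_combination f y * g z * hc x y z hy

def rotateAt (i : Fin n) : Idx p n t ≃ Idx p n t where
  toFun x := (Function.update x.1 i (finRotate _ (x.1 i)), x.2)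
  invFun x := (Function.update x.1 i ((finRotate _).symm (x.1 i)), x.2)
  left_inv x := by simp only [Function.update_self, Function.update_idem, Equiv.symm_apply_apply,
    Function.update_eq_self]
  right_inv x := by simp only [Function.update_self, Function.update_idem, Equiv.apply_symm_apply,
    Function.update_eq_self]

def evenWeight (i : Fin n) (x : Idx p n t) : F := if (x.1 i : ℕ) + 1 < p ^ t i then 1 else 0

lemma dEven_eq_weightedComp (i : Fin n) :
    dEven p n t F i = weightedComp (evenWeight i) (rotateAt i) := by
  funext h
  ext x
  rw [weightedComp_apply, evenWeight, dEven]
  split_ifs with hx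
  · rw [one_mul]
    congr 3
    ext
    rw [finRotate_apply, Fin.val_add_one_of_lt' hx]
  · rw [zero_mul]

lemma dEven_smul (i : Fin n) (c : F) (f : O p n t F) :
    dEven p n t F i (c • f) = c • dEven p n t F i f := by
  rw [dEven_eq_weightedComp]
  exact map_smul _ c f

lemma dEven_sum {ι : Type*} (s : Finset ι) (i : Fin n) (f : ι → O p n t F) :
    dEven p n t F i (∑ j ∈ s, f j) = ∑ j ∈ s, dEven p n t F i (f j) := by
  rw [dEven_eq_weightedComp]
  exact map_sum _ f s

lemma structConst_rotateAt (hp : p.Prime) [CharP F p] (i : Fin n) (x y z : Idx p n t) :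
    evenWeight i x * (structConst (rotateAt i x) y z : F) =
      evenWeight i ((rotateAt i).symm y) * structConst x ((rotateAt i).symm y) z +
        1 * (evenWeight i ((rotateAt i).symm z) * structConst x y ((rotateAt i).symm z)) := by
  set rest : F := ∏ j ∈ {i}ᶜ, dpCoeff (x.1 j) (y.1 j) (z.1 j)
  have split {u v w : Idx p n t}
      (h : ∀ j ≠ i, u.1 j = x.1 j ∧ v.1 j = y.1 j ∧ w.1 j = z.1 j) :
      ∏ j, (dpCoeff (u.1 j) (v.1 j) (w.1 j) : F) = dpCoeff (u.1 i) (v.1 i) (w.1 i) * rest := by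
    rw [Fintype.prod_eq_mul_prod_compl i]
    congr 1
    refine prod_congr rfl fun j hj => ?_
    obtain ⟨hu, hv, hw⟩ := h j (by simpa using hj)
    rw [hu, hv, hw]
  simp only [structConst, evenWeight]
  rw [split fun j hj => ⟨Function.update_of_ne hj _ _, rfl, rfl⟩,
    split fun j hj => ⟨rfl, Function.update_of_ne hj _ _, rfl⟩,
    split fun j hj => ⟨rfl, rfl, Function.update_of_ne hj _ _⟩]
  simp only [rotateAt, Equiv.coe_fn_mk, Equiv.coe_fn_symm_mk, Function.update_self]
  linear_combination extCoeff x.2 y.2 z.2 * rest *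
    dpCoeff_finRotate (R := F) hp (x.1 i) (y.1 i) (z.1 i)

theorem dEven_omul (hp : p.Prime) [CharP F p] (i : Fin n) (f g : O p n t F) :
    dEven p n t F i (omul p n t F f g) =
      omul p n t F (dEven p n t F i f) g + omul p n t F f (dEven p n t F i g) := by
  rw [dEven_eq_weightedComp]
  simpa using weightedComp_omul _ _ 1 g fun x y z _ => structConst_rotateAt hp i x y z

def toggleAt (k : Fin n) : Idx p n t ≃ Idx p n t :=
  Function.Involutive.toPerm (fun x => (x.1, x.2 ∆ {k})) fun x => by
    simp [symmDiff_symmDiff_cancel_right]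

lemma toggleAt_apply (k : Fin n) (x : Idx p n t) : toggleAt k x = (x.1, x.2 ∆ {k}) := rfl

lemma toggleAt_symm (k : Fin n) :
    (toggleAt k).symm = (toggleAt k : Idx p n t ≃ Idx p n t) := rfl

lemma dOdd_eq_weightedComp (k : Fin n) :
    dOdd p n t F k = weightedComp (fun x => oddWeight k x.2) (toggleAt k) := by
  funext h
  ext x
  rw [weightedComp_apply, oddWeight, dOdd]
  split_ifs with hx
  · rw [zero_mul]
  · rw [toggleAt_apply, symmDiff_singleton_of_notMem hx, countBelow]

lemma structConst_toggleAt {pf : ℕ} (k : Fin n) (x : Idx p n t) {y : Idx p n t}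
    (hy : #y.2 % 2 = pf % 2) (z : Idx p n t) :
    oddWeight k x.2 * (structConst (toggleAt k x) y z : F) =
      oddWeight k ((toggleAt k).symm y).2 * structConst x ((toggleAt k).symm y) z +
        (-1) ^ pf * (oddWeight k ((toggleAt k).symm z).2 *
          structConst x y ((toggleAt k).symm z)) := by
  simp only [structConst, toggleAt_symm, toggleAt_apply,
    ← neg_one_pow_eq_of_mod_two_eq (R := F) hy]
  linear_combination (∏ j, (dpCoeff (x.1 j) (y.1 j) (z.1 j) : F)) *
    extCoeff_leibniz (R := F) k x.2 y.2 z.2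

theorem dOdd_omul {pf : ℕ} {f : O p n t F} (hf : Homog p n t F pf f) (k : Fin n)
    (g : O p n t F) :
    dOdd p n t F k (omul p n t F f g) =
      omul p n t F (dOdd p n t F k f) g + (-1 : F) ^ pf • omul p n t F f (dOdd p n t F k g) := by
  rw [dOdd_eq_weightedComp]
  exact weightedComp_omul _ _ _ g fun x y z hy => structConst_toggleAt k x (hf y hy) z

lemma dOdd_smul (k : Fin n) (c : F) (f : O p n t F) :
    dOdd p n t F k (c • f) = c • dOdd p n t F k f := by
  rw [dOdd_eq_weightedComp]
  exact map_smul _ c f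

lemma dOdd_sum {ι : Type*} (s : Finset ι) (k : Fin n) (f : ι → O p n t F) :
    dOdd p n t F k (∑ j ∈ s, f j) = ∑ j ∈ s, dOdd p n t F k (f j) := by
  rw [dOdd_eq_weightedComp]
  exact map_sum _ f s

lemma dEven_dEven (i j : Fin n) (f : O p n t F) :
    dEven p n t F i (dEven p n t F j f) = dEven p n t F j (dEven p n t F i f) := by
  rcases eq_or_ne i j with rfl | hij
  · rfl
  funext x
  simp only [dEven, Function.update_of_ne hij, Function.update_of_ne hij.symm]
  by_cases hi : (x.1 i : ℕ) + 1 < p ^ t i <;> by_cases hj : (x.1 j : ℕ) + 1 < p ^ t j <;>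
    simp [hi, hj, Function.update_comm hij]

lemma dEven_dOdd (i k : Fin n) (f : O p n t F) :
    dEven p n t F i (dOdd p n t F k f) = dOdd p n t F k (dEven p n t F i f) := by
  funext x
  simp only [dEven, dOdd]
  by_cases hi : (x.1 i : ℕ) + 1 < p ^ t i <;> by_cases hk : k ∈ x.2 <;> simp [hi, hk]

lemma dOdd_dOdd (i k : Fin n) (f : O p n t F) :
    dOdd p n t F i (dOdd p n t F k f) = -dOdd p n t F k (dOdd p n t F i f) := by
  funext x
  simp only [dOdd, Pi.neg_apply]
  rcases eq_or_ne i k with rfl | hik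
  · by_cases hi : i ∈ x.2 <;> simp [hi]
  by_cases hi : i ∈ x.2
  · simp [hi]
  by_cases hk : k ∈ x.2
  · simp [hk]
  simp only [hi, hk, mem_insert, hik, hik.symm, or_self, if_false, insert_comm k i]
  have hsign : (-1 : F) ^ countBelow x.2 i * (-1) ^ countBelow (insert i x.2) k =
      -((-1) ^ countBelow x.2 k * (-1) ^ countBelow (insert k x.2) i) := by
    rw [countBelow_insert hi, countBelow_insert hk]
    rcases hik.lt_or_gt with h | h <;> simp [h, h.not_gt, pow_succ] <;> ring
  simp only [countBelow] at hsign
  linear_combination f (x.1, insert i (insert k x.2)) * hsign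

lemma homog_dEven {pa : ℕ} {a : O p n t F} (ha : Homog p n t F pa a) (i : Fin n) :
    Homog p n t F pa (dEven p n t F i a) := by
  intro x hx
  rw [dEven] at hx
  split_ifs at hx with h
  · exact ha (Function.update x.1 i ⟨_, h⟩, x.2) hx
  · exact absurd rfl hx

lemma homog_dOdd {pa : ℕ} {a : O p n t F} (ha : Homog p n t F pa a) (k : Fin n) :
    Homog p n t F (pa + 1) (dOdd p n t F k a) := by
  intro x hx
  rw [dOdd] at hx
  split_ifs at hx with hk
  · exact absurd rfl hx
  · have hcard := ha _ (right_ne_zero_of_mul hx)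
    rw [card_insert_of_notMem hk] at hcard
    omega

lemma homog_smul {pa : ℕ} {a : O p n t F} (ha : Homog p n t F pa a) (c : F) :
    Homog p n t F pa (c • a) :=
  fun x hx => ha x (right_ne_zero_of_mul hx)

end Superalgebra

section WittAction

variable {p n : ℕ} {t : Fin n → ℕ} {F : Type*} [Field F]

lemma dd_smul (r : Fin n ⊕ Fin n) (c : F) (f : O p n t F) :
    dd p n t F r (c • f) = c • dd p n t F r f := by
  rcases r with i | k
  exacts [dEven_smul i c f, dOdd_smul k c f]

lemma act_smul (X : W p n t F) (c : F) (v : O p n t F) :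
    act p n t F X (c • v) = c • act p n t F X v := by
  simp only [act, dd_smul, omul_smul_right, smul_sum]

lemma dEven_dd (k : Fin n) (r : Fin n ⊕ Fin n) (f : O p n t F) :
    dEven p n t F k (dd p n t F r f) = dd p n t F r (dEven p n t F k f) := by
  rcases r with i | j
  exacts [dEven_dEven k i f, dEven_dOdd k j f]

lemma dEven_act (hp : p.Prime) [CharP F p] (k : Fin n) (X : W p n t F) (c : O p n t F) :
    dEven p n t F k (act p n t F X c) =
      act p n t F (fun r => dEven p n t F k (X r)) c + act p n t F X (dEven p n t F k c) := by
  simp only [act, dEven_sum, dEven_omul hp, dEven_dd, sum_add_distrib]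

lemma dOdd_omul_dd {q : ℕ} {X : W p n t F} (hX₀ : ∀ i, Homog p n t F (q + 1) (X (Sum.inl i)))
    (hX₁ : ∀ j, Homog p n t F q (X (Sum.inr j))) (k : Fin n) (c : O p n t F)
    (r : Fin n ⊕ Fin n) :
    dOdd p n t F k (omul p n t F (X r) (dd p n t F r c)) =
      omul p n t F (dOdd p n t F k (X r)) (dd p n t F r c) +
        (-1 : F) ^ (q + 1) • omul p n t F (X r) (dd p n t F r (dOdd p n t F k c)) := by
  rcases r with i | j
  · rw [dOdd_omul (hX₀ i)]
    simp only [dd, Sum.elim_inl, dEven_dOdd]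
  · rw [dOdd_omul (hX₁ j)]
    simp only [dd, Sum.elim_inr, dOdd_dOdd k j c, omul_neg_right, pow_succ, mul_neg_one, neg_smul,
      smul_neg]

lemma dOdd_act {q : ℕ} {X : W p n t F} (hX₀ : ∀ i, Homog p n t F (q + 1) (X (Sum.inl i)))
    (hX₁ : ∀ j, Homog p n t F q (X (Sum.inr j))) (k : Fin n) (c : O p n t F) :
    dOdd p n t F k (act p n t F X c) =
      act p n t F (fun r => dOdd p n t F k (X r)) c +
        (-1 : F) ^ (q + 1) • act p n t F X (dOdd p n t F k c) := by
  simp only [act, dOdd_sum, dOdd_omul_dd hX₀ hX₁, sum_add_distrib, smul_sum]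

lemma TH_inl (pa : ℕ) (a : O p n t F) (i : Fin n) :
    TH p n t F pa a (Sum.inl i) = (-1 : F) ^ pa • dOdd p n t F i a := rfl

lemma TH_inr (pa : ℕ) (a : O p n t F) (k : Fin n) :
    TH p n t F pa a (Sum.inr k) = dEven p n t F k a := rfl

lemma dEven_comp_TH (k : Fin n) (pa : ℕ) (a : O p n t F) :
    (fun r => dEven p n t F k (TH p n t F pa a r)) = TH p n t F pa (dEven p n t F k a) := by
  funext r
  rcases r with i | j
  · simp only [TH_inl, dEven_smul, dEven_dOdd]
  · simp only [TH_inr, dEven_dEven]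

lemma dOdd_comp_TH (k : Fin n) (pa : ℕ) (a : O p n t F) :
    (fun r => dOdd p n t F k (TH p n t F pa a r)) = TH p n t F (pa + 1) (dOdd p n t F k a) := by
  funext r
  rcases r with i | j
  · simp only [TH_inl, dOdd_smul, dOdd_dOdd i k, smul_neg, pow_succ, mul_neg_one, neg_smul,
      neg_neg]
  · simp only [TH_inr, dEven_dOdd]

lemma dEven_act_TH (hp : p.Prime) [CharP F p] (k : Fin n) (pa : ℕ) (a c : O p n t F) :
    dEven p n t F k (act p n t F (TH p n t F pa a) c) =
      act p n t F (TH p n t F pa (dEven p n t F k a)) c +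
        act p n t F (TH p n t F pa a) (dEven p n t F k c) := by
  rw [dEven_act hp, dEven_comp_TH]

lemma dOdd_act_TH (k : Fin n) {pa : ℕ} {a : O p n t F} (ha : Homog p n t F pa a)
    (c : O p n t F) :
    dOdd p n t F k (act p n t F (TH p n t F pa a) c) =
      act p n t F (TH p n t F (pa + 1) (dOdd p n t F k a)) c +
        (-1 : F) ^ (pa + 1) • act p n t F (TH p n t F pa a) (dOdd p n t F k c) := by
  rw [dOdd_act (fun i => homog_smul (homog_dOdd ha i) _) (homog_dEven ha), dOdd_comp_TH]

theorem act_TH_comm {pa pb : ℕ} {a b : O p n t F} (ha : Homog p n t F pa a)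
    (hb : Homog p n t F pb b) :
    act p n t F (TH p n t F pa a) b =
      -(-1 : F) ^ ((pa + 1) * (pb + 1)) • act p n t F (TH p n t F pb b) a := by
  simp only [act, Fintype.sum_sum_type, TH_inl, TH_inr, dd, Sum.elim_inl, Sum.elim_inr, smul_add,
    smul_sum, omul_smul_left, smul_smul]
  rw [add_comm]
  congr 1
  · refine sum_congr rfl fun i _ => ?_
    rw [omul_comm (homog_dEven ha i) (homog_dOdd hb i)]
    congr 1
    by_cases hpa : Even pa <;> by_cases hpb : Even pb <;>
      simp [neg_one_pow_eq_ite, parity_simps, hpa, hpb]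
  · refine sum_congr rfl fun i _ => ?_
    rw [omul_comm (homog_dOdd ha i) (homog_dEven hb i), smul_smul]
    congr 1
    by_cases hpa : Even pa <;> by_cases hpb : Even pb <;>
      simp [neg_one_pow_eq_ite, parity_simps, hpa, hpb]

end WittAction

end OddHamiltonian

open OddHamiltonian

/-- `T_H(a)` has parity `p(a) + 1`, and `T_H(a)(b)` has parity `p(a) + p(b) + 1`. -/
theorem stmt9_general (p n : ℕ) (t : Fin n → ℕ) (F : Type*) [Field F]
    (hp : p.Prime) [CharP F p]
    (pa pb : ℕ) (a b : O p n t F)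
    (ha : Homog p n t F pa a) (hb : Homog p n t F pb b) :
    brkH p n t F (pa + 1) (pb + 1) (TH p n t F pa a) (TH p n t F pb b) =
      TH p n t F (pa + pb + 1) (act p n t F (TH p n t F pa a) b) := by
  funext s
  rcases s with i | k
  · simp only [brkH, TH_inl, act_smul, dOdd_act_TH i ha, act_TH_comm hb (homog_dOdd ha i),
      smul_add, smul_smul]
    by_cases hpa : Even pa <;> by_cases hpb : Even pb <;>
      simp [neg_one_pow_eq_ite, parity_simps, hpa, hpb] <;> module
  · simp only [brkH, TH_inr, dEven_act_TH hp k, act_TH_comm hb (homog_dEven ha k), smul_smul]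
    by_cases hpa : Even pa <;> by_cases hpb : Even pb <;>
      simp [parity_simps, hpa, hpb] <;> module

/-- For homogeneous `a, b ∈ O(n,n;t̲)`: `[T_H(a), T_H(b)] = T_H(T_H(a)(b))`; in
particular `HO(n,n;t̲) = T_H(O(n,n;t̲))` is a subsuperalgebra of `W(n,n;t̲)`.
`T_H(a)` has parity `p(a) + 1`, and `T_H(a)(b)` has parity `p(a) + p(b) + 1`. -/
theorem stmt9 (p n : ℕ) (t : Fin n → ℕ) (F : Type*) [Field F]
    (hp : p.Prime) (hp3 : 3 < p) [CharP F p] (hn : 3 ≤ n) (ht : ∀ i, 1 ≤ t i)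
    (pa pb : ℕ) (a b : O p n t F)
    (ha : Homog p n t F pa a) (hb : Homog p n t F pb b) :
    brkH p n t F (pa + 1) (pb + 1) (TH p n t F pa a) (TH p n t F pb b) =
      TH p n t F (pa + pb + 1) (act p n t F (TH p n t F pa a) b) :=
  stmt9_general p n t F hp pa pb a b ha hb
end

section
/- In W(n,n;t̲), for i,j ∈ {1,...,n}, i ≠ j, and l ∈ {n+1,...,2n} with l ≠ i+n, the bracket relation [T_H(x_i x_{j'}), T_H(x^{(2ε_j)} x_l)] = −T_H(x^{(ε_i + ε_j)} x_l) holds, where j' = j+n. -/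
open scoped BigOperators Classical

noncomputable def mono (p n : ℕ) (t : Fin n → ℕ) (F : Type*) [Field F]
    (α : Fin n → ℕ) (u : Finset (Fin n)) : O p n t F := fun x =>
  if (∀ j, (x.1 j : ℕ) = α j) ∧ x.2 = u then 1 else 0

theorem mono_apply_eq (p n : ℕ) (t : Fin n → ℕ) (F : Type*) [Field F]
    (α : Fin n → ℕ) (u : Finset (Fin n)) (hb : ∀ k, α k < p ^ t k) (y : Idx p n t) :
    mono p n t F α u y = if y = ((fun k => ⟨α k, hb k⟩ : ∀ k, Fin (p ^ t k)), u) then 1 else 0 := by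
  unfold mono
  congr 1
  simp only [eq_iff_iff, Prod.ext_iff, funext_iff, Fin.ext_iff]

theorem omul_mono (p n : ℕ) (t : Fin n → ℕ) (F : Type*) [Field F]
    (α β : Fin n → ℕ) (u v : Finset (Fin n))
    (hb : ∀ k, α k + β k < p ^ t k) (hmin : ∀ k, α k = 0 ∨ β k = 0)
    (he : u = ∅ ∨ v = ∅) (hd : Disjoint u v) :
    omul p n t F (mono p n t F α u) (mono p n t F β v)
      = mono p n t F (α + β) (u ∪ v) := by
  have hba : ∀ k, α k < p ^ t k := fun k => lt_of_le_of_lt (Nat.le_add_right _ _) (hb k)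
  have hbb : ∀ k, β k < p ^ t k := fun k => lt_of_le_of_lt (Nat.le_add_left _ _) (hb k)
  set y₀ : Idx p n t := ((fun k => ⟨α k, hba k⟩ : ∀ k, Fin (p ^ t k)), u) with hy₀
  set z₀ : Idx p n t := ((fun k => ⟨β k, hbb k⟩ : ∀ k, Fin (p ^ t k)), v) with hz₀
  funext x
  unfold omul
  simp only [mono_apply_eq p n t F α u hba, mono_apply_eq p n t F β v hbb, ← hy₀, ← hz₀]
  rw [Finset.sum_eq_single y₀]
  rotate_left
  · intro y _ hy
    apply Finset.sum_eq_zero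
    intro z _
    simp [if_neg hy]
  · simp
  rw [Finset.sum_eq_single z₀]
  rotate_left
  · intro z _ hz
    simp [if_neg hz]
  · simp
  simp only [if_pos rfl]
  have hcond : ((∀ i, ((y₀.1 i : ℕ) + (z₀.1 i : ℕ) = (x.1 i : ℕ))) ∧ Disjoint y₀.2 z₀.2 ∧ y₀.2 ∪ z₀.2 = x.2)
      ↔ ((∀ j, (x.1 j : ℕ) = (α + β) j) ∧ x.2 = u ∪ v) := by
    simp only [hy₀, hz₀, Pi.add_apply]
    constructor
    · rintro ⟨h1, _, h3⟩
      exact ⟨fun k => (h1 k).symm, h3.symm⟩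
    · rintro ⟨h1, h3⟩
      exact ⟨fun k => (h1 k).symm, hd, h3.symm⟩
  rw [if_congr hcond rfl rfl]
  unfold mono
  split_ifs with h
  · have hx1 : ∀ k, (x.1 k : ℕ) = α k + β k := h.1
    have hch : (∏ k, (((x.1 k : ℕ).choose (y₀.1 k : ℕ) : ℕ) : F)) = 1 := by
      rw [Finset.prod_eq_one]
      intro k _
      rcases hmin k with h0 | h0 <;>
        simp [hy₀, hx1 k, h0, Nat.choose_self]
    have hsg : (∑ a ∈ y₀.2, ((z₀.2.filter fun b => b < a).card)) = 0 := by
      rcases he with h0 | h0 <;> simp [hy₀, hz₀, h0]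
    rw [hch, hsg]
    ring
  · rfl

theorem mono_congr (p n : ℕ) (t : Fin n → ℕ) (F : Type*) [Field F]
    {α β : Fin n → ℕ} {u v : Finset (Fin n)} (h1 : α = β) (h2 : u = v) :
    mono p n t F α u = mono p n t F β v := by rw [h1, h2]
theorem dEven_mono_zero (p n : ℕ) (t : Fin n → ℕ) (F : Type*) [Field F]
    (k : Fin n) (α : Fin n → ℕ) (u : Finset (Fin n)) (h0 : α k = 0) :
    dEven p n t F k (mono p n t F α u) = 0 := by
  funext x
  unfold dEven mono
  split
  case isTrue h =>
    rw [if_neg, Pi.zero_apply]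
    rintro ⟨hc, -⟩
    have h0' : ((Function.update x.1 k ⟨(x.1 k : ℕ) + 1, h⟩) k : ℕ) = α k := hc k
    rw [Function.update_self] at h0'
    have h2 : (x.1 k : ℕ) + 1 = α k := h0'
    omega
  case isFalse h => rfl

theorem dEven_mono (p n : ℕ) (t : Fin n → ℕ) (F : Type*) [Field F]
    (k : Fin n) (α : Fin n → ℕ) (u : Finset (Fin n))
    (hb : α k < p ^ t k) (h1 : α k ≠ 0) :
    dEven p n t F k (mono p n t F α u)
      = mono p n t F (Function.update α k (α k - 1)) u := by
  funext x
  unfold dEven mono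
  split
  case isTrue h =>
    have hiff : ((∀ j : Fin n, ((Function.update x.1 k ⟨(x.1 k : ℕ) + 1, h⟩) j : ℕ) = α j)
          ∧ x.2 = u)
        ↔ ((∀ j : Fin n, (x.1 j : ℕ) = Function.update α k (α k - 1) j) ∧ x.2 = u) := by
      apply and_congr_left'
      constructor
      · intro hc m
        by_cases hm : m = k
        · subst hm
          have := hc m
          rw [Function.update_self] at this
          have h2 : (x.1 m : ℕ) + 1 = α m := this
          rw [Function.update_self]
          omega
        · have := hc m
          rw [Function.update_of_ne hm] at this
          rw [Function.update_of_ne hm]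
          exact this
      · intro hc m
        by_cases hm : m = k
        · subst hm
          have h2 : (x.1 m : ℕ) = α m - 1 := by
            have := hc m
            rwa [Function.update_self] at this
          rw [Function.update_self]
          show (x.1 m : ℕ) + 1 = α m
          omega
        · have := hc m
          rw [Function.update_of_ne hm] at this
          rw [Function.update_of_ne hm]
          exact this
    rw [if_congr hiff rfl rfl]
  case isFalse h =>
    rw [if_neg]
    rintro ⟨hc, -⟩
    have h2 : (x.1 k : ℕ) = α k - 1 := by
      have := hc k
      rwa [Function.update_self] at this
    omega

theorem dOdd_mono_notMem (p n : ℕ) (t : Fin n → ℕ) (F : Type*) [Field F]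
    (k : Fin n) (α : Fin n → ℕ) (u : Finset (Fin n)) (hk : k ∉ u) :
    dOdd p n t F k (mono p n t F α u) = 0 := by
  funext x
  unfold dOdd mono
  split
  case isTrue h => rfl
  case isFalse h =>
    rw [if_neg, mul_zero, Pi.zero_apply]
    rintro ⟨-, h2⟩
    exact hk (h2 ▸ Finset.mem_insert_self k x.2)

theorem dOdd_mono_singleton (p n : ℕ) (t : Fin n → ℕ) (F : Type*) [Field F]
    (k : Fin n) (α : Fin n → ℕ) :
    dOdd p n t F k (mono p n t F α {k}) = mono p n t F α ∅ := by
  funext x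
  unfold dOdd mono
  split
  case isTrue h =>
    rw [if_neg]
    rintro ⟨-, h2⟩
    exact absurd (h2 ▸ h) (Finset.notMem_empty k)
  case isFalse h =>
    by_cases hA : (∀ j : Fin n, (x.1 j : ℕ) = α j) ∧ insert k x.2 = {k}
    · have hx2 : x.2 = ∅ := by
        rw [Finset.eq_empty_iff_forall_notMem]
        intro a ha
        have hsub : x.2 ⊆ {k} := hA.2 ▸ Finset.subset_insert k x.2
        have := Finset.mem_singleton.mp (hsub ha)
        exact h (this ▸ ha)
      rw [if_pos hA, if_pos ⟨hA.1, hx2⟩, hx2]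
      simp
    · rw [if_neg hA, mul_zero, if_neg]
      rintro ⟨h5, h6⟩
      exact hA ⟨h5, by simp [h6]⟩
theorem omul_zero_left (p n : ℕ) (t : Fin n → ℕ) (F : Type*) [Field F] (g : O p n t F) :
    omul p n t F 0 g = 0 := by
  funext x; simp [omul]

theorem omul_zero_right (p n : ℕ) (t : Fin n → ℕ) (F : Type*) [Field F] (f : O p n t F) :
    omul p n t F f 0 = 0 := by
  funext x; simp [omul]

theorem dEven_zero (p n : ℕ) (t : Fin n → ℕ) (F : Type*) [Field F] (k : Fin n) :
    dEven p n t F k 0 = 0 := by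
  funext x; simp [dEven]

theorem dEven_neg (p n : ℕ) (t : Fin n → ℕ) (F : Type*) [Field F] (k : Fin n) (f : O p n t F) :
    dEven p n t F k (-f) = -dEven p n t F k f := by
  funext x; simp only [dEven, Pi.neg_apply]; split <;> simp

theorem dOdd_zero (p n : ℕ) (t : Fin n → ℕ) (F : Type*) [Field F] (k : Fin n) :
    dOdd p n t F k 0 = 0 := by
  funext x; simp [dOdd]

theorem dOdd_neg (p n : ℕ) (t : Fin n → ℕ) (F : Type*) [Field F] (k : Fin n) (f : O p n t F) :
    dOdd p n t F k (-f) = -dOdd p n t F k f := by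
  funext x; simp only [dOdd, Pi.neg_apply]; split <;> simp

theorem act_eq (p n : ℕ) (t : Fin n → ℕ) (F : Type*) [Field F]
    (X : W p n t F) (i₀ j₀ : Fin n)
    (hX : ∀ k, k ≠ i₀ → X (Sum.inl k) = 0) (hX' : ∀ k, k ≠ j₀ → X (Sum.inr k) = 0)
    (f : O p n t F) :
    act p n t F X f
      = omul p n t F (X (Sum.inl i₀)) (dEven p n t F i₀ f)
        + omul p n t F (X (Sum.inr j₀)) (dOdd p n t F j₀ f) := by
  unfold act
  rw [Fintype.sum_sum_type]
  congr 1
  · rw [Finset.sum_eq_single i₀]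
    · rfl
    · intro k _ hk
      rw [hX k hk, omul_zero_left]
    · simp
  · rw [Finset.sum_eq_single j₀]
    · rfl
    · intro k _ hk
      rw [hX' k hk, omul_zero_left]
    · simp

theorem act_zero (p n : ℕ) (t : Fin n → ℕ) (F : Type*) [Field F] (X : W p n t F) :
    act p n t F X 0 = 0 := by
  unfold act
  rw [Finset.sum_eq_zero, Pi.zero_def]  -- maybe fails; adjust
  intro r _
  cases r with
  | inl k => show omul p n t F _ (dEven p n t F k 0) = 0; rw [dEven_zero, omul_zero_right]
  | inr k => show omul p n t F _ (dOdd p n t F k 0) = 0; rw [dOdd_zero, omul_zero_right]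
theorem omul_neg_left (p n : ℕ) (t : Fin n → ℕ) (F : Type*) [Field F] (f g : O p n t F) :
    omul p n t F (-f) g = -omul p n t F f g := by
  funext x
  unfold omul
  rw [Pi.neg_apply, ← Finset.sum_neg_distrib]
  refine Finset.sum_congr rfl fun y _ => ?_
  rw [← Finset.sum_neg_distrib]
  refine Finset.sum_congr rfl fun z _ => ?_
  split <;> simp [neg_mul]

theorem omul_neg_right (p n : ℕ) (t : Fin n → ℕ) (F : Type*) [Field F] (f g : O p n t F) :
    omul p n t F f (-g) = -omul p n t F f g := by
  funext x
  unfold omul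
  rw [Pi.neg_apply, ← Finset.sum_neg_distrib]
  refine Finset.sum_congr rfl fun y _ => ?_
  rw [← Finset.sum_neg_distrib]
  refine Finset.sum_congr rfl fun z _ => ?_
  split <;> simp

/-- `[T_H(x_i x_{j'}), T_H(x^{(2ε_j)} x_l)] = −T_H(x^{(ε_i + ε_j)} x_l)` for
`i ≠ j ∈ Y_0` and odd `l ≠ i'` (odd indices represented by `Fin n`).  Note that
`x^{(ε_i+ε_j)} = x_i x_j` for `i ≠ j`. -/
theorem stmt11 (p n : ℕ) (t : Fin n → ℕ) (F : Type*) [Field F]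
    (hp : p.Prime) (hp3 : 3 < p) [CharP F p] (hn : 3 ≤ n) (ht : ∀ i, 1 ≤ t i)
    (i j l : Fin n) (hij : i ≠ j) (hl : l ≠ i) :
    brkH p n t F 0 0
        (TH p n t F 1 (omul p n t F (evar p n t F i) (ovar p n t F j)))
        (TH p n t F 1 (omul p n t F (epow p n t F j 2) (ovar p n t F l))) =
      -(TH p n t F 1
          (omul p n t F (omul p n t F (evar p n t F i) (evar p n t F j)) (ovar p n t F l))) := by
  classical
  have hq : ∀ (k : Fin n) (q : ℕ), q ≤ 3 → q < p ^ t k := by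
    intro k q hq3
    have h1 : p ≤ p ^ t k := Nat.le_self_pow (by have := ht k; omega) p
    omega
  set z0 : Fin n → ℕ := fun _ => 0 with hz0
  set εi : Fin n → ℕ := fun k => if k = i then 1 else 0 with hεi
  set εj : Fin n → ℕ := fun k => if k = j then 1 else 0 with hεj
  set ηj : Fin n → ℕ := fun k => if k = j then 2 else 0 with hηj
  have hvq : ∀ k, εi k ≤ 1 ∧ εj k ≤ 1 ∧ ηj k ≤ 2 ∧ z0 k = 0 := by
    intro k
    simp only [hεi, hεj, hηj, hz0]
    split_ifs <;> simp
  -- basic generator identifications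
  have hev_i : evar p n t F i = mono p n t F εi ∅ := rfl
  have hev_j : evar p n t F j = mono p n t F εj ∅ := rfl
  have hep : epow p n t F j 2 = mono p n t F ηj ∅ := rfl
  have hov : ∀ k : Fin n, ovar p n t F k = mono p n t F z0 {k} := fun _ => rfl
  -- the three basic products
  have ha : omul p n t F (evar p n t F i) (ovar p n t F j) = mono p n t F εi {j} := by
    rw [hev_i, hov, omul_mono p n t F εi z0 ∅ {j}
      (fun k => by have h3 := hq k 3 le_rfl; have h4 := hvq k; omega)
      (fun k => Or.inr (by simp [hz0])) (Or.inl rfl) (by simp)]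
    exact mono_congr p n t F (by funext k; simp [hz0]) (by simp)
  have hb : omul p n t F (epow p n t F j 2) (ovar p n t F l) = mono p n t F ηj {l} := by
    rw [hep, hov, omul_mono p n t F ηj z0 ∅ {l}
      (fun k => by have h3 := hq k 3 le_rfl; have h4 := hvq k; omega)
      (fun k => Or.inr (by simp [hz0])) (Or.inl rfl) (by simp)]
    exact mono_congr p n t F (by funext k; simp [hz0]) (by simp)
  have hc : omul p n t F (omul p n t F (evar p n t F i) (evar p n t F j)) (ovar p n t F l)
      = mono p n t F (εi + εj) {l} := by
    rw [hev_i, hev_j, hov, omul_mono p n t F εi εj ∅ ∅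
      (fun k => by have h3 := hq k 3 le_rfl; have h4 := hvq k; omega)
      (fun k => by
        by_cases hk : k = i
        · exact Or.inr (by simp [hεj, hk, hij])
        · exact Or.inl (by simp [hεi, hk]))
      (Or.inl rfl) (by simp)]
    rw [Finset.empty_union, omul_mono p n t F (εi + εj) z0 ∅ {l}
      (fun k => by have h3 := hq k 3 le_rfl; have h4 := hvq k; simp only [Pi.add_apply]; omega)
      (fun k => Or.inr (by simp [hz0])) (Or.inl rfl) (by simp)]
    exact mono_congr p n t F (by funext k; simp [hz0]) (by simp)
  rw [ha, hb, hc]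
  set X := TH p n t F 1 (mono p n t F εi {j}) with hX
  set Y := TH p n t F 1 (mono p n t F ηj {l}) with hY
  -- components of X
  have hX1 : ∀ k, k ≠ j → X (Sum.inl k) = 0 := by
    intro k hk
    show ((-1 : F) ^ 1) • dOdd p n t F k (mono p n t F εi {j}) = 0
    rw [dOdd_mono_notMem p n t F k εi {j} (by simp [hk]), smul_zero]
  have hX1j : X (Sum.inl j) = -(mono p n t F εi ∅) := by
    show ((-1 : F) ^ 1) • dOdd p n t F j (mono p n t F εi {j}) = _
    rw [dOdd_mono_singleton, pow_one, neg_smul, one_smul]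
  have hX2 : ∀ k, k ≠ i → X (Sum.inr k) = 0 := by
    intro k hk
    show dEven p n t F k (mono p n t F εi {j}) = 0
    exact dEven_mono_zero p n t F k εi {j} (by simp [hεi, hk])
  have hX2i : X (Sum.inr i) = mono p n t F z0 {j} := by
    show dEven p n t F i (mono p n t F εi {j}) = _
    rw [dEven_mono p n t F i εi {j} (by have h3 := hq i 3 le_rfl; have h4 := hvq i; omega)
      (by simp [hεi])]
    exact mono_congr p n t F (by
      funext k
      by_cases hk : k = i <;> simp [Function.update_apply, hk, hεi, hz0]) rfl
  -- components of Y
  have hY1 : ∀ k, k ≠ l → Y (Sum.inl k) = 0 := by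
    intro k hk
    show ((-1 : F) ^ 1) • dOdd p n t F k (mono p n t F ηj {l}) = 0
    rw [dOdd_mono_notMem p n t F k ηj {l} (by simp [hk]), smul_zero]
  have hY1l : Y (Sum.inl l) = -(mono p n t F ηj ∅) := by
    show ((-1 : F) ^ 1) • dOdd p n t F l (mono p n t F ηj {l}) = _
    rw [dOdd_mono_singleton, pow_one, neg_smul, one_smul]
  have hY2 : ∀ k, k ≠ j → Y (Sum.inr k) = 0 := by
    intro k hk
    show dEven p n t F k (mono p n t F ηj {l}) = 0
    exact dEven_mono_zero p n t F k ηj {l} (by simp [hηj, hk])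
  have hY2j : Y (Sum.inr j) = mono p n t F εj {l} := by
    show dEven p n t F j (mono p n t F ηj {l}) = _
    rw [dEven_mono p n t F j ηj {l} (by have h3 := hq j 3 le_rfl; have h4 := hvq j; omega)
      (by simp [hηj])]
    exact mono_congr p n t F (by
      funext k
      by_cases hk : k = j <;> simp [Function.update_apply, hk, hηj, hεj]) rfl
  -- act X applied to the relevant targets
  have hactX : ∀ f, act p n t F X f
      = omul p n t F (X (Sum.inl j)) (dEven p n t F j f)
        + omul p n t F (X (Sum.inr i)) (dOdd p n t F i f) :=
    fun f => act_eq p n t F X j i hX1 hX2 f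
  have hactY : ∀ f, act p n t F Y f
      = omul p n t F (Y (Sum.inl l)) (dEven p n t F l f)
        + omul p n t F (Y (Sum.inr j)) (dOdd p n t F j f) :=
    fun f => act_eq p n t F Y l j hY1 hY2 f
  -- key evaluation: act Y kills -(mono εi ∅)
  have hYkill : act p n t F Y (-(mono p n t F εi ∅)) = 0 := by
    rw [hactY, dEven_neg, dOdd_neg,
      dEven_mono_zero p n t F l εi ∅ (by simp [hεi, hl]),
      dOdd_mono_notMem p n t F j εi ∅ (Finset.notMem_empty j),
      neg_zero, omul_zero_right, omul_zero_right, add_zero]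
  funext s
  have hbrk : brkH p n t F 0 0 X Y s
      = act p n t F X (Y s) - act p n t F Y (X s) := by
    show act p n t F X (Y s) - ((-1 : F) ^ (0 * 0)) • act p n t F Y (X s) = _
    rw [Nat.mul_zero, pow_zero, one_smul]
  rw [hbrk]
  cases s with
  | inl k =>
    have hRHS : (-(TH p n t F 1 (mono p n t F (εi + εj) {l}))) (Sum.inl k)
        = dOdd p n t F k (mono p n t F (εi + εj) {l}) := by
      show -(((-1 : F) ^ 1) • dOdd p n t F k (mono p n t F (εi + εj) {l})) = _
      rw [pow_one, neg_smul, one_smul, neg_neg]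
    rw [hRHS]
    have hXterm : act p n t F Y (X (Sum.inl k)) = 0 := by
      by_cases hkj : k = j
      · subst hkj
        rw [hX1j, hYkill]
      · rw [hX1 k hkj, act_zero]
    rw [hXterm, sub_zero]
    by_cases hkl : k = l
    · subst hkl
      rw [hY1l, dOdd_mono_singleton, hactX, dEven_neg, dOdd_neg,
        dEven_mono p n t F j ηj ∅ (by have h3 := hq j 3 le_rfl; have h4 := hvq j; omega)
          (by simp [hηj]),
        dOdd_mono_notMem p n t F i ηj ∅ (Finset.notMem_empty i),
        neg_zero, omul_zero_right, add_zero, hX1j, omul_neg_left, omul_neg_right, neg_neg]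
      have hupd : Function.update ηj j (ηj j - 1) = εj := by
        funext m
        by_cases hm : m = j <;> simp [Function.update_apply, hm, hηj, hεj]
      rw [hupd, omul_mono p n t F εi εj ∅ ∅
        (fun m => by have h3 := hq m 3 le_rfl; have h4 := hvq m; omega)
        (fun m => by
          by_cases hm : m = i
          · exact Or.inr (by simp [hεj, hm, hij])
          · exact Or.inl (by simp [hεi, hm]))
        (Or.inl rfl) (by simp), Finset.empty_union]
    · rw [hY1 k hkl, act_zero,
        dOdd_mono_notMem p n t F k (εi + εj) {l} (by simp [hkl])]
  | inr k =>
    have hRHS : (-(TH p n t F 1 (mono p n t F (εi + εj) {l}))) (Sum.inr k)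
        = -(dEven p n t F k (mono p n t F (εi + εj) {l})) := rfl
    rw [hRHS]
    by_cases hkj : k = j
    · subst hkj
      rw [hX2 k (Ne.symm hij), act_zero, sub_zero, hY2j, hactX, hX1j, hX2i,
        dEven_mono p n t F k εj {l} (by have h3 := hq k 3 le_rfl; have h4 := hvq k; omega)
          (by simp [hεj]),
        dOdd_mono_notMem p n t F i εj {l} (by simp [Ne.symm hl]),
        omul_zero_right, add_zero, omul_neg_left]
      have hupd : Function.update εj k (εj k - 1) = z0 := by
        funext m
        by_cases hm : m = k <;> simp [Function.update_apply, hm, hεj, hz0]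
      have hupd2 : Function.update (εi + εj) k ((εi + εj) k - 1) = εi := by
        funext m
        by_cases hm : m = k <;>
          simp [Function.update_apply, hm, hεi, hεj, Ne.symm hij, hij]
      rw [hupd, dEven_mono p n t F k (εi + εj) {l}
        (by have h3 := hq k 3 le_rfl; have h4 := hvq k; simp only [Pi.add_apply]; omega)
        (by simp [Pi.add_apply, hεi, hεj, Ne.symm hij]), hupd2,
        omul_mono p n t F εi z0 ∅ {l}
        (fun m => by have h3 := hq m 3 le_rfl; have h4 := hvq m; omega)
        (fun m => Or.inr (by simp [hz0])) (Or.inl rfl) (by simp), Finset.empty_union]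
      exact congrArg Neg.neg (mono_congr p n t F (by funext m; simp [hz0]) rfl)
    · by_cases hki : k = i
      · subst hki
        rw [hY2 k hkj, act_zero, hX2i, hactY, hY1l, hY2j,
          dEven_mono_zero p n t F l z0 {j} (by simp [hz0]),
          omul_zero_right, zero_add, dOdd_mono_singleton,
          omul_mono p n t F εj z0 {l} ∅
            (fun m => by have h3 := hq m 3 le_rfl; have h4 := hvq m; omega)
            (fun m => Or.inr (by simp [hz0])) (Or.inr rfl) (by simp),
          Finset.union_empty, zero_sub]
        have hupd2 : Function.update (εi + εj) k ((εi + εj) k - 1) = εj := by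
          funext m
          by_cases hm : m = k <;>
            simp [Function.update_apply, hm, hεi, hεj, hij, Ne.symm hij]
        rw [dEven_mono p n t F k (εi + εj) {l}
          (by have h3 := hq k 3 le_rfl; have h4 := hvq k; simp only [Pi.add_apply]; omega)
          (by simp [Pi.add_apply, hεi, hεj, hij]), hupd2]
        exact congrArg Neg.neg (mono_congr p n t F (by funext m; simp [hz0]) rfl).symm
      · rw [hY2 k hkj, act_zero, hX2 k hki, act_zero, sub_zero,
          dEven_mono_zero p n t F k (εi + εj) {l} (by simp [hεi, hεj, hki, hkj]),
          neg_zero]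
end
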